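/- arXiv:2602.13492 — 3 statements merged into one kernel-verified Lean document; each statement's English description precedes it below -/
import Mathlib

section
/- Uniqueness of the interpolation Macdonald polynomial (Knop–Sahi): Let λ = (λ₁ ≥ … ≥ λₙ ≥ 0) be a partition. If P and P′ are two polynomials in K[x₁,…,xₙ] that each satisfy the defining conditions of the interpolation Macdonald polynomial P*_λ (symmetric, total degree ≤ |λ|, coefficient of x^λ equal to 1, and vanishing at ν̄ for every partition ν ≠ λ with |ν| ≤ |λ|), then P = P′. -/
open MvPolynomial

noncomputable section

/-- `k = ℚ(t)`, the field of rational functions in `t` over `ℚ`. -/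
abbrev kk : Type := RatFunc ℚ

/-- `K = k(q)`, the field of rational functions in `q` over `k`. -/
abbrev KK : Type := RatFunc kk

/-- The element `t` of `k`. -/
def tk : kk := RatFunc.X

/-- The element `t` of `K`. -/
def tK : KK := RatFunc.C tk

/-- The element `q` of `K`. -/
def qK : KK := RatFunc.X

/-- `kᵢ(μ) = #{j < i : μⱼ > μᵢ} + #{j > i : μⱼ ≥ μᵢ}`. -/
def kStat {n : ℕ} (μ : Fin n → ℕ) (i : Fin n) : ℕ :=
  (Finset.univ.filter (fun j => j < i ∧ μ i < μ j)).card +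
    (Finset.univ.filter (fun j => i < j ∧ μ i ≤ μ j)).card

/-- `μ̄ = (q^{μ₁} t^{−k₁(μ)}, …, q^{μₙ} t^{−kₙ(μ)}) ∈ Kⁿ`. -/
def mubar {n : ℕ} (μ : Fin n → ℕ) : Fin n → KK :=
  fun i => qK ^ (μ i) * tK ^ (-(kStat μ i : ℤ))

/-- `|μ| = μ₁ + ⋯ + μₙ`. -/
def wt {n : ℕ} (μ : Fin n → ℕ) : ℕ := ∑ i, μ i

/-- A partition: a weakly decreasing composition. -/
def IsPartition {n : ℕ} (μ : Fin n → ℕ) : Prop := ∀ i j : Fin n, i ≤ j → μ j ≤ μ i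

/-- The exponent vector of the monomial `x^μ`. -/
def toMono {n : ℕ} (μ : Fin n → ℕ) : Fin n →₀ ℕ := Finsupp.equivFunOnFinite.symm μ

/-- `Sₙ(λ)`: the set of compositions obtained by permuting the entries of `λ`. -/
def permSet {n : ℕ} (lam : Fin n → ℕ) : Finset (Fin n → ℕ) :=
  Finset.image (fun σ : Equiv.Perm (Fin n) => lam ∘ σ) Finset.univ

/-- The defining conditions of the interpolation Macdonald polynomial `P*_λ`. -/
def IsIntMacdonald {n : ℕ} (lam : Fin n → ℕ) (P : MvPolynomial (Fin n) KK) : Prop :=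
  P.IsSymmetric ∧ P.totalDegree ≤ wt lam ∧ P.coeff (toMono lam) = 1 ∧
    ∀ ν : Fin n → ℕ, IsPartition ν → ν ≠ lam → wt ν ≤ wt lam →
      MvPolynomial.eval (mubar ν) P = 0

/-- The defining conditions of the interpolation ASEP polynomial `F*_μ`,
with respect to the partition `λ` (the decreasing rearrangement of `μ`). -/
def IsIntASEP {n : ℕ} (lam μ : Fin n → ℕ) (F : MvPolynomial (Fin n) KK) : Prop :=
  F.totalDegree ≤ wt lam ∧
    (∀ τ ∈ permSet lam, F.coeff (toMono τ) = if τ = μ then 1 else 0) ∧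
    ∀ ν : Fin n → ℕ, wt ν ≤ wt lam → ν ∉ permSet lam →
      MvPolynomial.eval (mubar ν) F = 0

/-- The defining conditions of the nonsymmetric interpolation Macdonald polynomial `E*_μ`. -/
def IsIntE {n : ℕ} (μ : Fin n → ℕ) (E : MvPolynomial (Fin n) KK) : Prop :=
  E.totalDegree ≤ wt μ ∧ E.coeff (toMono μ) = 1 ∧
    ∀ ν : Fin n → ℕ, ν ≠ μ → wt ν ≤ wt μ → MvPolynomial.eval (mubar ν) E = 0

/-- Evaluation of a rational function in `q` at `q = 1` (junk value if not regular there). -/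
def atOne (c : KK) : kk := RatFunc.eval (RingHom.id kk) 1 c

/-- `P` is regular at `q = 1`: the reduced denominator of each coefficient does not
vanish at `q = 1`. -/
def RegAtOne {n : ℕ} (P : MvPolynomial (Fin n) KK) : Prop :=
  ∀ m : Fin n →₀ ℕ, Polynomial.eval (1 : kk) (P.coeff m).denom ≠ 0

/-- Coefficient-wise evaluation of `P` at `q = 1`. -/
def evalq1 {n : ℕ} (P : MvPolynomial (Fin n) KK) : MvPolynomial (Fin n) kk :=
  ∑ m ∈ P.support, monomial m (atOne (P.coeff m))

/-- The interpolation elementary polynomial `e*_{m,ℓ}(x₁,…,xₙ;t)`, with coefficients in `k`. -/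
def estar (n m : ℕ) (ℓ : ℤ) : MvPolynomial (Fin n) kk :=
  ∑ S ∈ Finset.powersetCard m (Finset.univ : Finset (Fin n)),
    ∏ i ∈ S, (X i - C (tk ^ (((Sᶜ.filter (fun j => j < i)).card : ℤ) - ℓ)))

/-- The interpolation elementary polynomial `e*_{m,ℓ}(x₁,…,xₙ;t)`, with coefficients in `K`. -/
def estarK (n m : ℕ) (ℓ : ℤ) : MvPolynomial (Fin n) KK :=
  ∑ S ∈ Finset.powersetCard m (Finset.univ : Finset (Fin n)),
    ∏ i ∈ S, (X i - C (tK ^ (((Sᶜ.filter (fun j => j < i)).card : ℤ) - ℓ)))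

/-- The conjugate partition: `λ′ᵢ = #{j : λⱼ ≥ i}`. -/
def conjP {n : ℕ} (lam : Fin n → ℕ) (i : ℕ) : ℕ :=
  (Finset.univ.filter (fun j => i ≤ lam j)).card


namespace IMacAux

variable {n : ℕ}

def dotp (a b : Fin n → ℕ) : ℕ := ∑ i, a i * b i

lemma dotp_cauchy (a b : Fin n → ℕ) : 2 * dotp a b ≤ dotp a a + dotp b b := by
  unfold dotp
  rw [two_mul, ← Finset.sum_add_distrib, ← Finset.sum_add_distrib]
  refine Finset.sum_le_sum fun i _ => ?_
  rcases le_total (a i) (b i) with h | h <;> nlinarith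

lemma dotp_cauchy_eq {a b : Fin n → ℕ} (h : 2 * dotp a b = dotp a a + dotp b b) : a = b := by
  unfold dotp at h
  rw [two_mul, ← Finset.sum_add_distrib, ← Finset.sum_add_distrib] at h
  have hle : ∀ i ∈ Finset.univ, a i * b i + a i * b i ≤ a i * a i + b i * b i := by
    intro i _
    rcases le_total (a i) (b i) with hh | hh <;> nlinarith
  have := (Finset.sum_eq_sum_iff_of_le hle).1 h
  funext i
  have h2 := this i (Finset.mem_univ i)
  have h3 : ((a i : ℤ) - b i)^2 = 0 := by nlinarith [h2]
  have := pow_eq_zero_iff (n := 2) (by norm_num) |>.1 h3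
  omega

lemma mem_permSet {τ κ : Fin n → ℕ} : τ ∈ permSet κ ↔ ∃ σ : Equiv.Perm (Fin n), κ ∘ σ = τ := by
  simp [permSet, Finset.mem_image]

lemma self_mem_permSet (κ : Fin n → ℕ) : κ ∈ permSet κ := mem_permSet.2 ⟨1, rfl⟩

lemma wt_of_mem_permSet {τ κ : Fin n → ℕ} (h : τ ∈ permSet κ) : wt τ = wt κ := by
  obtain ⟨σ, rfl⟩ := mem_permSet.1 h
  exact Equiv.sum_comp σ κ

lemma dotp_self_of_mem_permSet {τ κ : Fin n → ℕ} (h : τ ∈ permSet κ) :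
    dotp τ τ = dotp κ κ := by
  obtain ⟨σ, rfl⟩ := mem_permSet.1 h
  exact Equiv.sum_comp σ (fun i => κ i * κ i)

lemma card_le_filter {κ ν : Fin n → ℕ} (σ : Equiv.Perm (Fin n)) (h : κ ∘ σ = ν) (v : ℕ) :
    (Finset.univ.filter fun j => v ≤ ν j).card = (Finset.univ.filter fun j => v ≤ κ j).card := by
  subst h
  apply Finset.card_bij (fun j _ => σ j)
  · intro a ha
    simpa using (Finset.mem_filter.1 ha).2
  · intro a _ b _ hab; exact σ.injective hab
  · intro b hb
    refine ⟨σ.symm b, ?_, by simp⟩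
    simp only [Finset.mem_filter, Finset.mem_univ, true_and, Function.comp_apply] at hb ⊢
    simpa using hb

lemma partition_count {κ : Fin n → ℕ} (hκ : IsPartition κ) (i : Fin n) (v : ℕ) :
    v ≤ κ i ↔ (i : ℕ) < (Finset.univ.filter fun j => v ≤ κ j).card := by
  constructor
  · intro hv
    have hsub : Finset.Iic i ⊆ Finset.univ.filter fun j => v ≤ κ j := by
      intro j hj
      simp only [Finset.mem_filter, Finset.mem_univ, true_and]
      exact le_trans hv (hκ j i (Finset.mem_Iic.1 hj))
    calc (i:ℕ) < (i:ℕ) + 1 := Nat.lt_succ_self _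
    _ = (Finset.Iic i).card := by rw [Fin.card_Iic]
    _ ≤ _ := Finset.card_le_card hsub
  · intro hc
    by_contra hv
    have hsub : (Finset.univ.filter fun j => v ≤ κ j) ⊆ Finset.Iio i := by
      intro j hj
      simp only [Finset.mem_filter, Finset.mem_univ, true_and] at hj
      rw [Finset.mem_Iio]
      by_contra hji
      exact hv (le_trans hj (hκ i j (le_of_not_gt hji)))
    have := Finset.card_le_card hsub
    rw [Fin.card_Iio] at this
    omega

lemma partition_eq_of_mem_permSet {κ ν : Fin n → ℕ} (hκ : IsPartition κ) (hν : IsPartition ν)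
    (h : ν ∈ permSet κ) : ν = κ := by
  obtain ⟨σ, hσ⟩ := mem_permSet.1 h
  funext i
  have key : ∀ v, v ≤ ν i ↔ v ≤ κ i := by
    intro v
    rw [partition_count hν i v, partition_count hκ i v, card_le_filter σ hσ]
  have h1 := (key (ν i)).1 le_rfl
  have h2 := (key (κ i)).2 le_rfl
  omega

lemma exists_partition_mem (g : Fin n → ℕ) :
    ∃ μ : Fin n → ℕ, IsPartition μ ∧ g ∈ permSet μ := by
  let s := Tuple.sort g
  have hmono : Monotone (g ∘ s) := Tuple.monotone_sort g
  refine ⟨g ∘ s ∘ Fin.rev, ?_, ?_⟩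
  · intro i j hij
    exact hmono (Fin.rev_le_rev.2 hij)
  · refine mem_permSet.2 ⟨(Fin.revPerm.trans s)⁻¹, ?_⟩
    have : (g ∘ s ∘ Fin.rev) = g ∘ ⇑(Fin.revPerm.trans s) := by
      funext x; rfl
    rw [this]
    funext x
    have h4 : ((Fin.revPerm.trans s)⁻¹ x) = (s⁻¹ x).rev := rfl
    show g (s ((Fin.revPerm.trans s)⁻¹ x).rev) = g x
    rw [h4, Fin.rev_rev]
    simp

instance : DecidablePred (@IsPartition n) := fun _ => by unfold IsPartition; infer_instance

def PartsLE (n d : ℕ) : Finset (Fin n → ℕ) :=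
  (Fintype.piFinset fun _ : Fin n => Finset.range (d+1)).filter
    (fun μ => IsPartition μ ∧ wt μ ≤ d)

lemma mem_PartsLE {d : ℕ} {μ : Fin n → ℕ} :
    μ ∈ PartsLE n d ↔ IsPartition μ ∧ wt μ ≤ d := by
  unfold PartsLE
  rw [Finset.mem_filter, Fintype.mem_piFinset]
  constructor
  · exact fun h => h.2
  · intro h
    refine ⟨fun i => ?_, h⟩
    rw [Finset.mem_range]
    have : μ i ≤ wt μ := Finset.single_le_sum (f := μ) (fun j _ => Nat.zero_le _) (Finset.mem_univ i)
    omega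

def msymm (κ : Fin n → ℕ) : MvPolynomial (Fin n) KK :=
  ∑ τ ∈ permSet κ, monomial (toMono τ) (1 : KK)

def Ment (ν κ : Fin n → ℕ) : Polynomial kk :=
  ∑ τ ∈ permSet κ, Polynomial.C ((tk ^ dotp τ (kStat ν))⁻¹) * Polynomial.X ^ dotp τ ν

lemma tK_ne_zero : (tK : KK) ≠ 0 := by
  have hinj : Function.Injective (RatFunc.C : kk →+* RatFunc kk) := RatFunc.C_injective
  exact fun h => RatFunc.X_ne_zero (hinj (by simpa [tK, tk] using h))

lemma tk_pow_inv_ne_zero (e : ℕ) : ((tk ^ e)⁻¹ : kk) ≠ 0 :=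
  inv_ne_zero (pow_ne_zero e RatFunc.X_ne_zero)

lemma eval_monomial_mubar (ν τ : Fin n → ℕ) :
    eval (mubar ν) (monomial (toMono τ) (1 : KK)) =
      qK ^ dotp τ ν * (tK ^ dotp τ (kStat ν))⁻¹ := by
  rw [eval_monomial, one_mul]
  have h1 : (toMono τ).prod (fun i e => mubar ν i ^ e) = ∏ i, mubar ν i ^ τ i := by
    rw [Finsupp.prod_pow]
    rfl
  rw [h1]
  have h2 : ∀ i, mubar ν i ^ τ i
      = qK ^ (τ i * ν i) * ((tK ^ (τ i * kStat ν i))⁻¹) := by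
    intro i
    rw [mubar, mul_pow, ← pow_mul, zpow_neg, zpow_natCast, ← inv_pow, ← pow_mul, inv_pow,
      mul_comm (ν i) (τ i), mul_comm (kStat ν i) (τ i)]
  rw [Finset.prod_congr rfl (fun i _ => h2 i), Finset.prod_mul_distrib,
    Finset.prod_inv_distrib, Finset.prod_pow_eq_pow_sum, Finset.prod_pow_eq_pow_sum]
  rfl

lemma eval_msymm (ν κ : Fin n → ℕ) :
    eval (mubar ν) (msymm κ) = algebraMap (Polynomial kk) KK (Ment ν κ) := by
  unfold msymm Ment
  rw [map_sum, map_sum]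
  refine Finset.sum_congr rfl fun τ _ => ?_
  rw [eval_monomial_mubar, map_mul, RatFunc.algebraMap_C, map_pow, RatFunc.algebraMap_X,
    map_inv₀, map_pow]
  rw [mul_comm]
  rfl

lemma Ment_natDegree_le (ν κ : Fin n → ℕ) {B : ℕ}
    (h : ∀ τ ∈ permSet κ, dotp τ ν ≤ B) : (Ment ν κ).natDegree ≤ B := by
  unfold Ment
  refine Polynomial.natDegree_sum_le_of_forall_le _ _ fun τ hτ => ?_
  exact le_trans (Polynomial.natDegree_C_mul_le _ _) (by simpa using h τ hτ)

lemma dotp_lt_of_ne {ν κ τ : Fin n → ℕ} (hτ : τ ∈ permSet κ) (hne : τ ≠ ν) :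
    2 * dotp τ ν < dotp ν ν + dotp κ κ := by
  have h1 := dotp_cauchy τ ν
  have h2 := dotp_self_of_mem_permSet hτ
  by_contra hle
  have heq : 2 * dotp τ ν = dotp τ τ + dotp ν ν := by omega
  exact hne (dotp_cauchy_eq heq)

lemma Ment_coeff_self (ν : Fin n → ℕ) :
    (Ment ν ν).coeff (dotp ν ν) = (tk ^ dotp ν (kStat ν))⁻¹ := by
  unfold Ment
  rw [Polynomial.finset_sum_coeff]
  have hside : ∀ τ ∈ permSet ν, τ ≠ ν →
      (Polynomial.C ((tk ^ dotp τ (kStat ν))⁻¹) * Polynomial.X ^ dotp τ ν).coeff (dotp ν ν) = 0 := by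
    intro τ hτ hne
    have hlt := dotp_lt_of_ne hτ hne
    have heq := dotp_self_of_mem_permSet hτ
    have hne2 : dotp ν ν ≠ dotp τ ν := by omega
    rw [Polynomial.coeff_C_mul, Polynomial.coeff_X_pow, if_neg hne2, mul_zero]
  rw [Finset.sum_eq_single_of_mem ν (self_mem_permSet ν) hside, Polynomial.coeff_C_mul,
    Polynomial.coeff_X_pow, if_pos rfl, mul_one]

lemma Ment_natDegree_self (ν : Fin n → ℕ) : (Ment ν ν).natDegree = dotp ν ν := by
  refine le_antisymm (Ment_natDegree_le ν ν fun τ hτ => ?_) ?_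
  · rcases eq_or_ne τ ν with rfl | hne
    · exact le_rfl
    · have := dotp_lt_of_ne hτ hne
      have := dotp_self_of_mem_permSet hτ
      omega
  · exact Polynomial.le_natDegree_of_ne_zero (by rw [Ment_coeff_self]; exact tk_pow_inv_ne_zero _)

lemma Ment_self_ne_zero (ν : Fin n → ℕ) : Ment ν ν ≠ 0 := fun h => by
  have := Ment_coeff_self ν
  rw [h, Polynomial.coeff_zero] at this
  exact tk_pow_inv_ne_zero _ this.symm

lemma Ment_leadingCoeff_self (ν : Fin n → ℕ) :
    (Ment ν ν).leadingCoeff = (tk ^ dotp ν (kStat ν))⁻¹ := by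
  rw [Polynomial.leadingCoeff, Ment_natDegree_self, Ment_coeff_self]

lemma Ment_natDegree_lt {ν κ : Fin n → ℕ} (hν : IsPartition ν) (hκ : IsPartition κ)
    (hne : ν ≠ κ) : 2 * (Ment ν κ).natDegree + 1 ≤ dotp ν ν + dotp κ κ := by
  have key : ∀ τ ∈ permSet κ, 2 * dotp τ ν + 1 ≤ dotp ν ν + dotp κ κ := by
    intro τ hτ
    have hτν : τ ≠ ν := by
      rintro rfl
      exact hne (partition_eq_of_mem_permSet hκ hν hτ)
    have := dotp_lt_of_ne hτ hτν
    omega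
  have hc : 1 ≤ dotp ν ν + dotp κ κ := by
    have := key κ (self_mem_permSet κ)
    omega
  have hB : (Ment ν κ).natDegree ≤ (dotp ν ν + dotp κ κ - 1) / 2 := by
    refine Ment_natDegree_le ν κ fun τ hτ => ?_
    have := key τ hτ
    omega
  omega


lemma permSet_trans {g μ μ' : Fin n → ℕ} (h1 : g ∈ permSet μ) (h2 : g ∈ permSet μ') :
    μ ∈ permSet μ' := by
  obtain ⟨σ, hσ⟩ := mem_permSet.1 h1
  obtain ⟨σ', hσ'⟩ := mem_permSet.1 h2
  refine mem_permSet.2 ⟨σ⁻¹.trans σ', ?_⟩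
  funext x
  have : μ (σ (σ⁻¹ x)) = μ' (σ' (σ⁻¹ x)) := by
    rw [show μ (σ (σ⁻¹ x)) = (μ ∘ ⇑σ) (σ⁻¹ x) from rfl, hσ, ← hσ']
    rfl
  simpa using this.symm

lemma partition_unique {g μ μ' : Fin n → ℕ} (hμ : IsPartition μ) (hμ' : IsPartition μ')
    (h1 : g ∈ permSet μ) (h2 : g ∈ permSet μ') : μ = μ' :=
  partition_eq_of_mem_permSet hμ' hμ (permSet_trans h1 h2)

lemma det_ne_zero (d : ℕ) :
    (Matrix.det (Matrix.of fun ν κ : (PartsLE n d : Finset (Fin n → ℕ)) =>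
      Ment (ν : Fin n → ℕ) (κ : Fin n → ℕ))) ≠ 0 := by
  classical
  set S := (PartsLE n d : Finset (Fin n → ℕ))
  set M : Matrix S S (Polynomial kk) :=
    Matrix.of fun ν κ : S => Ment (ν : Fin n → ℕ) (κ : Fin n → ℕ) with hM
  set A : ℕ := ∑ ν : S, dotp (ν : Fin n → ℕ) (ν : Fin n → ℕ) with hA
  have hpart : ∀ ν : S, IsPartition (ν : Fin n → ℕ) := fun ν => (mem_PartsLE.1 ν.2).1
  have hdiagnd : (∏ ν : S, M ν ν).natDegree = A := by
    show (∏ ν : S, Ment ((ν : Fin n → ℕ)) ((ν : Fin n → ℕ))).natDegree = A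
    rw [Polynomial.natDegree_prod _ _ (fun ν _ => Ment_self_ne_zero _)]
    exact Finset.sum_congr rfl fun ν _ => Ment_natDegree_self _
  have hdiag : (∏ ν : S, M ν ν).coeff A ≠ 0 := by
    rw [← hdiagnd]
    show (∏ ν : S, M ν ν).leadingCoeff ≠ 0
    rw [Polynomial.leadingCoeff_prod]
    refine Finset.prod_ne_zero_iff.2 fun ν _ => ?_
    rw [show M ν ν = Ment (ν : Fin n → ℕ) (ν : Fin n → ℕ) from rfl, Ment_leadingCoeff_self]
    exact tk_pow_inv_ne_zero _
  have hoff : ∀ π : Equiv.Perm S, π ≠ 1 → (∏ ν : S, M (π ν) ν).coeff A = 0 := by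
    intro π hπ
    show (∏ ν : S, Ment ((π ν : Fin n → ℕ)) ((ν : Fin n → ℕ))).coeff A = 0
    apply Polynomial.coeff_eq_zero_of_natDegree_lt
    have hle : (∏ ν : S, Ment ((π ν : Fin n → ℕ)) ((ν : Fin n → ℕ))).natDegree
        ≤ ∑ ν : S, (Ment ((π ν : Fin n → ℕ)) ((ν : Fin n → ℕ))).natDegree :=
      Polynomial.natDegree_prod_le _ _
    have hstrict : ∑ ν : S, 2 * (Ment ((π ν : Fin n → ℕ)) ((ν : Fin n → ℕ))).natDegree <
        ∑ ν : S, (dotp (π ν : Fin n → ℕ) (π ν : Fin n → ℕ) + dotp (ν : Fin n → ℕ) ν) := by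
      obtain ⟨i, hi⟩ : ∃ i, π i ≠ i := by
        by_contra hall
        push_neg at hall
        exact hπ (Equiv.ext fun x => hall x)
      refine Finset.sum_lt_sum (fun ν _ => ?_) ⟨i, Finset.mem_univ i, ?_⟩
      · rcases eq_or_ne (π ν) ν with he | hne
        · rw [he]
          have h1 : (Ment ((ν : Fin n → ℕ)) ((ν : Fin n → ℕ))).natDegree
              = dotp (ν : Fin n → ℕ) ν := Ment_natDegree_self _
          omega
        · have := Ment_natDegree_lt (hpart (π ν)) (hpart ν)
            (fun hc => hne (Subtype.ext hc))
          omega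
      · have := Ment_natDegree_lt (hpart (π i)) (hpart i)
          (fun hc => hi (Subtype.ext hc))
        omega
    have hsum : ∑ ν : S, (dotp (π ν : Fin n → ℕ) (π ν : Fin n → ℕ) + dotp (ν : Fin n → ℕ) ν)
        = 2 * A := by
      rw [Finset.sum_add_distrib, Equiv.sum_comp π (fun ν : S => dotp (ν : Fin n → ℕ) ν), hA]
      ring
    have h2 : 2 * (∑ ν : S, (Ment ((π ν : Fin n → ℕ)) ((ν : Fin n → ℕ))).natDegree) < 2 * A := by
      rw [Finset.mul_sum]
      omega
    omega
  intro h0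
  have hcoef : (Matrix.det M).coeff A ≠ 0 := by
    rw [Matrix.det_apply]
    rw [Polynomial.finset_sum_coeff]
    rw [Finset.sum_eq_single_of_mem (1 : Equiv.Perm S) (Finset.mem_univ _)]
    · simpa using hdiag
    · intro π _ hπ
      rw [Polynomial.coeff_smul, hoff π hπ, smul_zero]
  rw [h0] at hcoef
  simp at hcoef

lemma coeff_perm {f : MvPolynomial (Fin n) KK} (hs : f.IsSymmetric) (μ : Fin n → ℕ)
    (σ : Equiv.Perm (Fin n)) : f.coeff (toMono (μ ∘ σ)) = f.coeff (toMono μ) := by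
  have hmap : toMono (μ ∘ σ) = (toMono μ).mapDomain ⇑σ⁻¹ := by
    ext j
    rw [Finsupp.mapDomain_equiv_apply]
    simp only [toMono, Finsupp.coe_equivFunOnFinite_symm, Function.comp_apply]
    rw [Equiv.Perm.inv_def, Equiv.symm_symm]
  conv_lhs => rw [← hs σ⁻¹, hmap, coeff_rename_mapDomain _ (Equiv.injective _)]

lemma coeff_msymm (μ : Fin n → ℕ) (m : Fin n →₀ ℕ) :
    (msymm μ).coeff m = if ⇑m ∈ permSet μ then (1 : KK) else 0 := by
  unfold msymm
  rw [MvPolynomial.coeff_sum]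
  have h1 : ∀ τ ∈ permSet μ, (monomial (toMono τ) (1 : KK)).coeff m
      = if τ = ⇑m then (1:KK) else 0 := by
    intro τ _
    rw [coeff_monomial]
    congr 1
    simp only [eq_iff_iff]
    constructor
    · rintro rfl
      funext j
      simp [toMono]
    · rintro rfl
      exact (Finsupp.equivFunOnFinite_symm_coe m).symm ▸ rfl
  rw [Finset.sum_congr rfl h1, Finset.sum_ite_eq' (permSet μ) (⇑m) (fun _ => (1:KK))]

lemma wt_coe_eq_sum (m : Fin n →₀ ℕ) : (m.sum fun _ e => e) = wt ⇑m := by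
  rw [Finsupp.sum_fintype]
  · rfl
  · intro i; rfl

lemma decomp {d : ℕ} {f : MvPolynomial (Fin n) KK} (hs : f.IsSymmetric)
    (hd : f.totalDegree ≤ d) :
    f = ∑ μ ∈ PartsLE n d, (f.coeff (toMono μ)) • msymm μ := by
  apply MvPolynomial.ext
  intro m
  rw [MvPolynomial.coeff_sum]
  have hterm : ∀ μ ∈ PartsLE n d, ((f.coeff (toMono μ)) • msymm μ).coeff m
      = f.coeff (toMono μ) * (if ⇑m ∈ permSet μ then (1:KK) else 0) := by
    intro μ _
    rw [MvPolynomial.coeff_smul, coeff_msymm]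
    rfl
  rw [Finset.sum_congr rfl hterm]
  obtain ⟨μ₀, hμ₀p, hμ₀m⟩ := exists_partition_mem ⇑m
  by_cases hwt : wt ⇑m ≤ d
  · have hμ₀S : μ₀ ∈ PartsLE n d := by
      rw [mem_PartsLE]
      exact ⟨hμ₀p, by rw [← wt_of_mem_permSet hμ₀m]; exact hwt⟩
    rw [Finset.sum_eq_single_of_mem μ₀ hμ₀S]
    · rw [if_pos hμ₀m, mul_one]
      obtain ⟨σ, hσ⟩ := mem_permSet.1 hμ₀m
      have := coeff_perm hs μ₀ σ
      rw [hσ] at this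
      rw [← this]
      congr 1
      simp [toMono]
    · intro μ hμS hμne
      rw [if_neg, mul_zero]
      intro hmem
      exact hμne (partition_unique (mem_PartsLE.1 hμS).1 hμ₀p hmem hμ₀m)
  · have hzero : f.coeff m = 0 := by
      by_contra hne
      have hsup : m ∈ f.support := by
        rw [MvPolynomial.mem_support_iff]; exact hne
      have := MvPolynomial.le_totalDegree hsup
      rw [wt_coe_eq_sum] at this
      omega
    rw [hzero]
    symm
    refine Finset.sum_eq_zero fun μ hμS => ?_
    rw [if_neg, mul_zero]
    intro hmem
    have h1 := wt_of_mem_permSet hmem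
    have h2 := (mem_PartsLE.1 hμS).2
    omega

lemma vanish_zero {d : ℕ} {f : MvPolynomial (Fin n) KK} (hs : f.IsSymmetric)
    (hd : f.totalDegree ≤ d)
    (hv : ∀ ν : Fin n → ℕ, IsPartition ν → wt ν ≤ d → eval (mubar ν) f = 0) : f = 0 := by
  classical
  let M : Matrix (PartsLE n d : Finset (Fin n → ℕ)) (PartsLE n d : Finset (Fin n → ℕ)) KK :=
    Matrix.of fun ν κ =>
      algebraMap (Polynomial kk) KK (Ment (ν : Fin n → ℕ) (κ : Fin n → ℕ))
  have hdet : M.det ≠ 0 := by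
    have hmapeq : M.det = algebraMap (Polynomial kk) KK
        ((Matrix.of fun ν κ : (PartsLE n d : Finset (Fin n → ℕ)) =>
          Ment (ν : Fin n → ℕ) (κ : Fin n → ℕ)).det) := by
      rw [RingHom.map_det]
      rfl
    rw [hmapeq]
    intro h
    exact det_ne_zero d (RatFunc.algebraMap_injective kk (by rw [h, map_zero]))
  let c : ↥(PartsLE n d) → KK := fun μ => f.coeff (toMono (μ : Fin n → ℕ))
  have hmv : M.mulVec c = 0 := by
    funext ν
    have h0 : eval (mubar (ν : Fin n → ℕ)) f = 0 :=
      hv _ (mem_PartsLE.1 ν.2).1 (mem_PartsLE.1 ν.2).2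
    conv_lhs at h0 => rw [decomp hs hd]
    rw [map_sum] at h0
    have hterm : ∀ μ ∈ PartsLE n d,
        eval (mubar (ν : Fin n → ℕ)) ((f.coeff (toMono μ)) • msymm μ)
        = f.coeff (toMono μ) * algebraMap (Polynomial kk) KK (Ment (ν : Fin n → ℕ) μ) := by
      intro μ _
      rw [MvPolynomial.smul_eq_C_mul, map_mul, eval_C, eval_msymm]
    rw [Finset.sum_congr rfl hterm] at h0
    rw [← Finset.sum_coe_sort (PartsLE n d)
      (fun μ => f.coeff (toMono μ) * algebraMap (Polynomial kk) KK (Ment (ν : Fin n → ℕ) μ))] at h0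
    show (∑ μ : ↥(PartsLE n d), M ν μ * c μ) = 0
    rw [← h0]
    exact Finset.sum_congr rfl fun μ _ => mul_comm _ _
  have hc0 : c = 0 := Matrix.eq_zero_of_mulVec_eq_zero hdet hmv
  rw [decomp hs hd]
  refine Finset.sum_eq_zero fun μ hμ => ?_
  have h5 : c ⟨μ, hμ⟩ = 0 := by rw [hc0]; rfl
  have h6 : f.coeff (toMono μ) = 0 := h5
  rw [h6, zero_smul]


end IMacAux

/-- Uniqueness of the interpolation Macdonald polynomial (Knop–Sahi). -/
theorem interpolation_macdonald_unique (n : ℕ) (hn : 0 < n)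
    (lam : Fin n → ℕ) (hlam : IsPartition lam)
    (P P' : MvPolynomial (Fin n) KK)
    (hP : IsIntMacdonald lam P) (hP' : IsIntMacdonald lam P') :
    P = P' := by
  classical
  obtain ⟨hs, hdeg, hcoe, hvan⟩ := hP
  obtain ⟨hs', hdeg', hcoe', hvan'⟩ := hP'
  have haP : eval (mubar lam) P ≠ 0 := by
    intro h0
    have hz : P = 0 := by
      refine IMacAux.vanish_zero (d := wt lam) hs hdeg fun ν hν hwt => ?_
      rcases eq_or_ne ν lam with rfl | hne
      · exact h0
      · exact hvan ν hν hne hwt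
    rw [hz, MvPolynomial.coeff_zero] at hcoe
    exact one_ne_zero hcoe.symm
  set a := eval (mubar lam) P with ha
  set D := P - P' with hDdef
  set c0 := eval (mubar lam) D with hc0def
  have hsymD : D.IsSymmetric := hs.sub hs'
  have hdegD : D.totalDegree ≤ wt lam :=
    le_trans (MvPolynomial.totalDegree_sub P P') (max_le hdeg hdeg')
  have hcoeD : D.coeff (toMono lam) = 0 := by
    rw [hDdef, MvPolynomial.coeff_sub, hcoe, hcoe', sub_self]
  have hvanD : ∀ ν : Fin n → ℕ, IsPartition ν → ν ≠ lam → wt ν ≤ wt lam →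
      eval (mubar ν) D = 0 := by
    intro ν hν hne hwt
    rw [hDdef, map_sub, hvan ν hν hne hwt, hvan' ν hν hne hwt, sub_self]
  have hh : a • D - c0 • P = 0 := by
    refine IMacAux.vanish_zero (d := wt lam) ((hsymD.smul a).sub (hs.smul c0)) ?_ ?_
    · refine le_trans (MvPolynomial.totalDegree_sub _ _) (max_le ?_ ?_)
      · exact le_trans (MvPolynomial.totalDegree_smul_le _ _) hdegD
      · exact le_trans (MvPolynomial.totalDegree_smul_le _ _) hdeg
    · intro ν hν hwt
      rw [map_sub, MvPolynomial.smul_eq_C_mul, MvPolynomial.smul_eq_C_mul, map_mul, map_mul,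
        eval_C, eval_C]
      rcases eq_or_ne ν lam with rfl | hne
      · rw [← ha, ← hc0def]
        ring
      · rw [hvanD ν hν hne hwt, hvan ν hν hne hwt]
        ring
  have heq : a • D = c0 • P := sub_eq_zero.mp hh
  have hc0z : c0 = 0 := by
    have hco := congrArg (MvPolynomial.coeff (toMono lam)) heq
    rw [MvPolynomial.coeff_smul, MvPolynomial.coeff_smul, hcoeD, hcoe] at hco
    simpa using hco.symm
  have hDz : D = 0 := by
    rw [hc0z, zero_smul] at heq
    rcases smul_eq_zero.mp heq with h | h
    · exact absurd h haP
    · exact h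
  have := sub_eq_zero.mp hDz
  exact this
end
end

section
/- Uniqueness of the interpolation ASEP polynomial: Let λ be a partition with |λ| = d and let μ ∈ Sₙ(λ). If F and F′ are two polynomials in K[x₁,…,xₙ] that each satisfy the defining conditions of the interpolation ASEP polynomial F*_μ, then F = F′. -/
open MvPolynomial

noncomputable section

/-! ### Auxiliary lemmas for the uniqueness proof -/

private lemma two_mul_mul_le' (a b : ℕ) : 2 * (a * b) ≤ a * a + b * b := by
  rcases le_total a b with h | h
  · obtain ⟨k, rfl⟩ := Nat.exists_eq_add_of_le h; nlinarith
  · obtain ⟨k, rfl⟩ := Nat.exists_eq_add_of_le h; nlinarith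

private lemma two_mul_mul_lt' (a b : ℕ) (h : a ≠ b) : 2 * (a * b) < a * a + b * b := by
  rcases Nat.lt_or_ge a b with h' | h'
  · obtain ⟨k, hk, rfl⟩ : ∃ k, 0 < k ∧ b = a + k := ⟨b - a, by omega, by omega⟩
    nlinarith
  · have h'' : b < a := by omega
    obtain ⟨k, hk, rfl⟩ : ∃ k, 0 < k ∧ a = b + k := ⟨a - b, by omega, by omega⟩
    nlinarith

private lemma dot_ineq_le' {n : ℕ} (x y : Fin n → ℕ) :
    2 * (∑ i, x i * y i) ≤ (∑ i, x i * x i) + (∑ i, y i * y i) := by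
  rw [Finset.mul_sum, ← Finset.sum_add_distrib]
  exact Finset.sum_le_sum fun i _ => two_mul_mul_le' (x i) (y i)

private lemma dot_ineq_lt' {n : ℕ} (x y : Fin n → ℕ) (h : x ≠ y) :
    2 * (∑ i, x i * y i) < (∑ i, x i * x i) + (∑ i, y i * y i) := by
  obtain ⟨j, hj⟩ := Function.ne_iff.mp h
  rw [Finset.mul_sum, ← Finset.sum_add_distrib]
  exact Finset.sum_lt_sum (fun i _ => two_mul_mul_le' _ _)
    ⟨j, Finset.mem_univ j, two_mul_mul_lt' _ _ hj⟩

private lemma prod_zpow_sum' {ι : Type*} (s : Finset ι) {G₀ : Type*} [CommGroupWithZero G₀]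
    (x : G₀) (hx : x ≠ 0) (f : ι → ℤ) :
    ∏ i ∈ s, x ^ f i = x ^ (∑ i ∈ s, f i) := by
  induction s using Finset.cons_induction with
  | empty => simp
  | cons a s ha ih => rw [Finset.prod_cons, Finset.sum_cons, ih, ← zpow_add₀ hx]

/-- A square matrix whose `(i,j)` entry is a nonzero scalar times `X ^ e i j`, where the
exponents satisfy a strict "diagonal dominance" (Cauchy–Schwarz type) inequality, has
nonzero determinant: the coefficient of `X ^ (∑ i, e i i)` in the determinant comes only
from the identity permutation. -/
private lemma det_monomial_ne_zero' {ι : Type*} [Fintype ι] [DecidableEq ι]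
    (e : ι → ι → ℕ) (f : ι → ι → kk)
    (hdiag : ∀ i, f i i ≠ 0)
    (hle : ∀ i j, 2 * e i j ≤ e i i + e j j)
    (hlt : ∀ i j, i ≠ j → 2 * e i j < e i i + e j j) :
    (Matrix.of fun i j => Polynomial.C (f i j) * Polynomial.X ^ e i j).det ≠ 0 := by
  classical
  set M₀ := ∑ i, e i i with hM₀def
  have hprod : ∀ σ : Equiv.Perm ι,
      (∏ i, (Polynomial.C (f (σ i) i) * Polynomial.X ^ e (σ i) i))
        = Polynomial.C (∏ i, f (σ i) i) * Polynomial.X ^ (∑ i, e (σ i) i) := by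
    intro σ
    rw [Finset.prod_mul_distrib, map_prod, Finset.prod_pow_eq_pow_sum]
  have hE : ∀ σ : Equiv.Perm ι, σ ≠ 1 → (∑ i, e (σ i) i) < M₀ := by
    intro σ hσ
    have hex : ∃ j, σ j ≠ j := by
      by_contra hcon
      push_neg at hcon
      exact hσ (Equiv.ext hcon)
    obtain ⟨j, hj⟩ := hex
    have h1 : ∑ i, 2 * e (σ i) i < ∑ i, (e (σ i) (σ i) + e i i) :=
      Finset.sum_lt_sum (fun i _ => hle (σ i) i)
        ⟨j, Finset.mem_univ j, hlt (σ j) j hj⟩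
    have h2 : ∑ i, e (σ i) (σ i) = M₀ := Equiv.sum_comp σ (fun i => e i i)
    have h3 : ∑ i, 2 * e (σ i) i = 2 * ∑ i, e (σ i) i := by rw [Finset.mul_sum]
    have h4 : ∑ i, (e (σ i) (σ i) + e i i) = M₀ + M₀ := by
      rw [Finset.sum_add_distrib, h2, hM₀def]
    omega
  have hcoeff :
      ((Matrix.of fun i j => Polynomial.C (f i j) * Polynomial.X ^ e i j).det).coeff M₀
        = ∏ i, f i i := by
    rw [Matrix.det_apply, Polynomial.finset_sum_coeff]
    rw [Finset.sum_eq_single (1 : Equiv.Perm ι)]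
    · simp only [Matrix.of_apply, Equiv.Perm.sign_one, one_smul]
      rw [hprod 1]
      simp only [Equiv.Perm.one_apply]
      rw [Polynomial.coeff_C_mul, Polynomial.coeff_X_pow, if_pos hM₀def, mul_one]
    · intro σ _ hσ
      rw [Polynomial.coeff_smul]
      simp only [Matrix.of_apply]
      rw [hprod σ, Polynomial.coeff_C_mul, Polynomial.coeff_X_pow,
        if_neg (Ne.symm (Nat.ne_of_lt (hE σ hσ))), mul_zero, smul_zero]
    · intro h; exact absurd (Finset.mem_univ _) h
  intro h
  rw [h, Polynomial.coeff_zero] at hcoeff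
  exact (Finset.prod_ne_zero_iff.mpr (fun i _ => hdiag i)) hcoeff.symm

private lemma tK_ne_zero' : (tK : KK) ≠ 0 := by
  rw [tK]
  exact (map_ne_zero_iff _ (RingHom.injective (RatFunc.C : kk →+* KK))).mpr RatFunc.X_ne_zero

/-- Evaluation of the monomial `x^a` at the point `ν̄` is a single monomial in `q` (with a
power of `t` as coefficient). -/
private lemma mubar_monomial' {n : ℕ} (ν a : Fin n → ℕ) :
    ∏ i, (mubar ν i) ^ (a i)
      = algebraMap (Polynomial kk) KK
          (Polynomial.C (tk ^ (-((∑ i, kStat ν i * a i : ℕ) : ℤ)))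
            * Polynomial.X ^ (∑ i, ν i * a i)) := by
  rw [map_mul, RatFunc.algebraMap_C, map_pow, RatFunc.algebraMap_X]
  have hC : (RatFunc.C (tk ^ (-((∑ i, kStat ν i * a i : ℕ) : ℤ))) : KK)
      = tK ^ (-((∑ i, kStat ν i * a i : ℕ) : ℤ)) := by
    rw [tK]; exact map_zpow₀ (RatFunc.C : kk →+* KK) tk _
  rw [hC]
  have hfac : ∀ i : Fin n, (mubar ν i) ^ a i
      = RatFunc.X ^ (ν i * a i) * tK ^ (-((kStat ν i * a i : ℕ) : ℤ)) := by
    intro i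
    rw [mubar, mul_pow]
    congr 1
    · rw [qK, ← pow_mul]
    · rw [← zpow_natCast (tK ^ (-(kStat ν i : ℤ))) (a i), ← zpow_mul]
      congr 1
      push_cast
      ring
  rw [Finset.prod_congr rfl (fun i _ => hfac i), Finset.prod_mul_distrib,
    Finset.prod_pow_eq_pow_sum, prod_zpow_sum' _ _ tK_ne_zero']
  rw [mul_comm]
  congr 1
  push_cast
  rw [Finset.sum_neg_distrib]

/-- Uniqueness of the interpolation ASEP polynomial. -/
theorem interpolation_asep_unique (n : ℕ) (hn : 0 < n)
    (lam : Fin n → ℕ) (hlam : IsPartition lam)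
    (μ : Fin n → ℕ) (hμ : μ ∈ permSet lam)
    (F F' : MvPolynomial (Fin n) KK)
    (hF : IsIntASEP lam μ F) (hF' : IsIntASEP lam μ F') :
    F = F' := by
  classical
  obtain ⟨hFdeg, hFcoeff, hFvan⟩ := hF
  obtain ⟨hF'deg, hF'coeff, hF'van⟩ := hF'
  set d := wt lam with hd
  set G : MvPolynomial (Fin n) KK := F - F' with hGdef
  have hGdeg : G.totalDegree ≤ d :=
    le_trans (MvPolynomial.totalDegree_sub F F') (max_le hFdeg hF'deg)
  have hGcoeffS : ∀ τ ∈ permSet lam, G.coeff (toMono τ) = 0 := by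
    intro τ hτ
    rw [hGdef, MvPolynomial.coeff_sub, hFcoeff τ hτ, hF'coeff τ hτ, sub_self]
  have hGvan : ∀ ν : Fin n → ℕ, wt ν ≤ d → ν ∉ permSet lam →
      MvPolynomial.eval (mubar ν) G = 0 := by
    intro ν h1 h2
    rw [hGdef, map_sub, hFvan ν h1 h2, hF'van ν h1 h2, sub_self]
  suffices hG0 : G = 0 by
    have := hGdef ▸ hG0
    exact sub_eq_zero.mp this
  -- The finite set of "free" compositions
  set T : Finset (Fin n → ℕ) :=
    (Fintype.piFinset fun _ : Fin n => Finset.range (d + 1)).filter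
      (fun ν => wt ν ≤ d ∧ ν ∉ permSet lam) with hT
  have hmemT : ∀ ν : Fin n → ℕ, ν ∈ T ↔ wt ν ≤ d ∧ ν ∉ permSet lam := by
    intro ν
    rw [hT, Finset.mem_filter, Fintype.mem_piFinset]
    constructor
    · rintro ⟨-, h⟩; exact h
    · rintro ⟨h1, h2⟩
      refine ⟨fun i => Finset.mem_range.mpr ?_, h1, h2⟩
      have hle : ν i ≤ wt ν :=
        Finset.single_le_sum (fun j _ => Nat.zero_le _) (Finset.mem_univ i)
      omega
  have hcoeM : ∀ a : Fin n → ℕ, ⇑(toMono a) = a := by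
    intro a
    rfl
  have hMcoe : ∀ m : Fin n →₀ ℕ, toMono (⇑m) = m := by
    intro m
    exact Finsupp.equivFunOnFinite_symm_coe m
  -- the support of G lands in T
  have hsupp : ∀ m ∈ G.support, (⇑m : Fin n → ℕ) ∈ T := by
    intro m hm
    rw [hmemT]
    constructor
    · have h1 := MvPolynomial.le_totalDegree hm
      have h2 : (m.sum fun _ e => e) = wt ⇑m := by
        rw [Finsupp.sum_fintype _ _ (fun _ => rfl)]; rfl
      omega
    · intro hS
      have hz : G.coeff m = 0 := by
        have := hGcoeffS _ hS
        rwa [hMcoe m] at this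
      exact (MvPolynomial.mem_support_iff.mp hm) hz
  -- the interpolation matrix
  set ee : ↥T → ↥T → ℕ :=
    fun ν a => ∑ i, (ν : Fin n → ℕ) i * (a : Fin n → ℕ) i with hee
  set ffm : ↥T → ↥T → kk :=
    fun ν a => tk ^ (-((∑ i, kStat (↑ν) i * (↑a : Fin n → ℕ) i : ℕ) : ℤ)) with hffm
  set Mp : Matrix ↥T ↥T (Polynomial kk) :=
    Matrix.of fun ν a => Polynomial.C (ffm ν a) * Polynomial.X ^ (ee ν a) with hMp
  have hdet : Mp.det ≠ 0 := by
    apply det_monomial_ne_zero' ee ffm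
    · intro i
      exact zpow_ne_zero _ RatFunc.X_ne_zero
    · intro i j
      exact dot_ineq_le' _ _
    · intro i j hij
      exact dot_ineq_lt' _ _ (fun h => hij (Subtype.ext h))
  set A : Matrix ↥T ↥T KK :=
    (algebraMap (Polynomial kk) KK).mapMatrix Mp with hA
  have hdetA : IsUnit A.det := by
    rw [hA, ← RingHom.map_det]
    exact isUnit_iff_ne_zero.mpr
      ((map_ne_zero_iff _ (RatFunc.algebraMap_injective kk)).mpr hdet)
  set c : ↥T → KK := fun a => G.coeff (toMono ↑a) with hc
  -- the linear system
  have hMV : A.mulVec c = 0 := by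
    funext ν
    have hν := (hmemT ↑ν).mp ν.2
    have hAentry : ∀ a : ↥T, A ν a = ∏ i, (mubar (↑ν) i) ^ ((↑a : Fin n → ℕ) i) := by
      intro a
      rw [hA, RingHom.mapMatrix_apply, Matrix.map_apply, hMp, Matrix.of_apply,
        mubar_monomial' ν.1 a.1]
    have step1 : A.mulVec c ν
        = ∑ a : ↥T, (∏ i, (mubar (↑ν) i) ^ ((↑a : Fin n → ℕ) i)) * G.coeff (toMono ↑a) := by
      simp only [Matrix.mulVec, dotProduct, hc]
      exact Finset.sum_congr rfl fun a _ => by rw [hAentry a]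
    have step2 : (∑ a : ↥T, (∏ i, (mubar (↑ν) i) ^ ((↑a : Fin n → ℕ) i)) * G.coeff (toMono ↑a))
        = ∑ a ∈ T, (∏ i, (mubar (↑ν) i) ^ (a i)) * G.coeff (toMono a) :=
      Finset.sum_coe_sort T (fun a => (∏ i, (mubar (↑ν) i) ^ (a i)) * G.coeff (toMono a))
    have hinj : ∀ x ∈ T, ∀ y ∈ T, toMono x = toMono y → x = y :=
      fun x _ y _ h => Finsupp.equivFunOnFinite.symm.injective h
    have step3 : (∑ m ∈ T.image toMono, (∏ i, (mubar (↑ν) i) ^ (m i)) * G.coeff m)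
        = ∑ a ∈ T, (∏ i, (mubar (↑ν) i) ^ (a i)) * G.coeff (toMono a) := by
      rw [Finset.sum_image hinj]
      exact Finset.sum_congr rfl fun a _ => by rw [hcoeM a]
    have hsub : G.support ⊆ T.image toMono := by
      intro m hm
      rw [Finset.mem_image]
      exact ⟨⇑m, hsupp m hm, hMcoe m⟩
    have step4 : (∑ m ∈ G.support, (∏ i, (mubar (↑ν) i) ^ (m i)) * G.coeff m)
        = ∑ m ∈ T.image toMono, (∏ i, (mubar (↑ν) i) ^ (m i)) * G.coeff m := by
      apply Finset.sum_subset hsub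
      intro m _ hm
      rw [MvPolynomial.notMem_support_iff.mp hm, mul_zero]
    have step5 : MvPolynomial.eval (mubar (↑ν)) G
        = ∑ m ∈ G.support, (∏ i, (mubar (↑ν) i) ^ (m i)) * G.coeff m := by
      rw [MvPolynomial.eval_eq']
      exact Finset.sum_congr rfl fun m _ => mul_comm _ _
    have : A.mulVec c ν = MvPolynomial.eval (mubar (↑ν)) G := by
      rw [step1, step2, ← step3, ← step4, ← step5]
    rw [this, hGvan (↑ν) hν.1 hν.2]
    rfl
  -- conclude c = 0
  have hc0 : c = 0 := by
    have h1 : A⁻¹ * A = 1 := Matrix.nonsing_inv_mul A hdetA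
    calc c = (1 : Matrix ↥T ↥T KK).mulVec c := (Matrix.one_mulVec c).symm
      _ = (A⁻¹ * A).mulVec c := by rw [h1]
      _ = A⁻¹.mulVec (A.mulVec c) := (Matrix.mulVec_mulVec c A⁻¹ A).symm
      _ = A⁻¹.mulVec 0 := by rw [hMV]
      _ = 0 := Matrix.mulVec_zero _
  -- conclude G = 0
  apply MvPolynomial.ext
  intro m
  rw [MvPolynomial.coeff_zero]
  by_cases hm : m ∈ G.support
  · have h1 := hsupp m hm
    have h2 := congrFun hc0 (⟨⇑m, h1⟩ : ↥T)
    rw [hc] at h2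
    simpa [hMcoe m] using h2
  · exact MvPolynomial.notMem_support_iff.mp hm
end
end

section
/- Symmetrization identity: Let λ be a partition. Suppose P ∈ K[x₁,…,xₙ] satisfies the defining conditions of the interpolation Macdonald polynomial P*_λ, and suppose (F_μ)_{μ ∈ Sₙ(λ)} is a family of polynomials in K[x₁,…,xₙ] such that for each μ ∈ Sₙ(λ), F_μ satisfies the defining conditions of the interpolation ASEP polynomial F*_μ. Then P = Σ_{μ ∈ Sₙ(λ)} F_μ. -/
open MvPolynomial

noncomputable section

lemma tk_ne : tk ≠ 0 := RatFunc.X_ne_zero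
lemma tK_ne : tK ≠ 0 := by
  have : Function.Injective (RatFunc.C : kk →+* KK) := RatFunc.C_injective
  simpa [tK, map_zero] using fun h => tk_ne (this (by simpa using h))

lemma prod_zpow' {α : Type*} {x : KK} (hx : x ≠ 0) (s : Finset α) (f : α → ℤ) :
    ∏ i ∈ s, x ^ f i = x ^ (∑ i ∈ s, f i) := by
  induction s using Finset.cons_induction with
  | empty => simp
  | cons a s ha ih => rw [Finset.prod_cons, Finset.sum_cons, ih, zpow_add₀ hx]

lemma prod_zpow_poly {α : Type*} (s : Finset α) (f : α → ℤ) :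
    ∏ i ∈ s, tk ^ f i = tk ^ (∑ i ∈ s, f i) := by
  induction s using Finset.cons_induction with
  | empty => simp
  | cons a s ha ih => rw [Finset.prod_cons, Finset.sum_cons, ih, zpow_add₀ tk_ne]

lemma psi_entry (z : ℤ) (e : ℕ) :
    algebraMap (Polynomial kk) KK (Polynomial.C (tk ^ z) * Polynomial.X ^ e) =
      tK ^ z * qK ^ e := by
  rw [map_mul, map_pow, RatFunc.algebraMap_C, RatFunc.algebraMap_X]
  rw [map_zpow₀ (RatFunc.C : kk →+* KK) tk z]
  rfl

lemma entry_eq {n : ℕ} (ν μ : Fin n → ℕ) :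
    (∏ i, (mubar ν i) ^ (μ i)) =
      tK ^ (-(∑ i, (kStat ν i : ℤ) * (μ i : ℤ))) * qK ^ (∑ i, ν i * μ i) := by
  simp only [mubar, mul_pow]
  rw [Finset.prod_mul_distrib, mul_comm]
  congr 1
  · have h1 : ∀ x : Fin n, (tK ^ (-(kStat ν x : ℤ))) ^ (μ x) =
        tK ^ ((-(kStat ν x : ℤ)) * (μ x : ℤ)) := by
      intro x
      rw [← zpow_natCast (tK ^ (-(kStat ν x : ℤ))) (μ x), ← zpow_mul]
    rw [Finset.prod_congr rfl (fun x _ => h1 x), prod_zpow' tK_ne]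
    congr 1
    rw [← Finset.sum_neg_distrib]
    apply Finset.sum_congr rfl
    intros; ring
  · have h2 : ∀ x : Fin n, (qK ^ ν x) ^ (μ x) = qK ^ (ν x * μ x) := fun x => by
      rw [← pow_mul]
    rw [Finset.prod_congr rfl (fun x _ => h2 x), Finset.prod_pow_eq_pow_sum]

lemma perm_sum_lt {n : ℕ} (s : Finset (Fin n →₀ ℕ)) (σ : Equiv.Perm ↥s) (hσ : σ ≠ 1) :
    (∑ x : ↥s, ∑ i, ((σ x : Fin n →₀ ℕ) i) * ((x : Fin n →₀ ℕ) i)) <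
      ∑ x : ↥s, ∑ i, ((x : Fin n →₀ ℕ) i) * ((x : Fin n →₀ ℕ) i) := by
  set f : ↥s → Fin n → ℤ := fun x i => ((x : Fin n →₀ ℕ) i : ℤ) with hf
  have hSc : (∑ x : ↥s, ∑ i, f (σ x) i * f (σ x) i) = ∑ x : ↥s, ∑ i, f x i * f x i :=
    Equiv.sum_comp σ (fun x => ∑ i, f x i * f x i)
  -- positivity of the sum of squares
  obtain ⟨x₀, hx₀⟩ : ∃ x, σ x ≠ x := by
    by_contra hc
    push_neg at hc
    exact hσ (Equiv.ext hc)
  have hcne : (σ x₀ : Fin n →₀ ℕ) ≠ (x₀ : Fin n →₀ ℕ) := fun h => hx₀ (Subtype.ext h)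
  obtain ⟨i₀, hi₀⟩ : ∃ i, (σ x₀ : Fin n →₀ ℕ) i ≠ (x₀ : Fin n →₀ ℕ) i := by
    by_contra hc
    push_neg at hc
    exact hcne (Finsupp.ext hc)
  have hpos : (0 : ℤ) < ∑ x : ↥s, ∑ i, (f x i - f (σ x) i) ^ 2 := by
    apply Finset.sum_pos'
    · intro x _
      exact Finset.sum_nonneg fun i _ => sq_nonneg _
    · refine ⟨x₀, Finset.mem_univ _, ?_⟩
      apply Finset.sum_pos' (fun i _ => sq_nonneg _)
      refine ⟨i₀, Finset.mem_univ _, ?_⟩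
      have hne : f x₀ i₀ - f (σ x₀) i₀ ≠ 0 := by
        have hz : ((x₀ : Fin n →₀ ℕ) i₀ : ℤ) ≠ ((σ x₀ : Fin n →₀ ℕ) i₀ : ℤ) := by
          exact_mod_cast (Ne.symm hi₀)
        simpa [hf, sub_ne_zero] using hz
      exact lt_of_le_of_ne (sq_nonneg _) (Ne.symm (pow_ne_zero 2 hne))
  have hterm : ∀ x : ↥s, (∑ i, (f x i - f (σ x) i) ^ 2) =
      (∑ i, f x i * f x i) - 2 * (∑ i, f (σ x) i * f x i) + (∑ i, f (σ x) i * f (σ x) i) := by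
    intro x
    rw [Finset.mul_sum, ← Finset.sum_sub_distrib, ← Finset.sum_add_distrib]
    apply Finset.sum_congr rfl
    intros; ring
  have hexp : (∑ x : ↥s, ∑ i, (f x i - f (σ x) i) ^ 2) =
      (∑ x : ↥s, ∑ i, f x i * f x i) - 2 * (∑ x : ↥s, ∑ i, f (σ x) i * f x i) +
        (∑ x : ↥s, ∑ i, f (σ x) i * f (σ x) i) := by
    rw [Finset.sum_congr rfl (fun x _ => hterm x), Finset.mul_sum,
      ← Finset.sum_sub_distrib, ← Finset.sum_add_distrib]
  have hltZ : (∑ x : ↥s, ∑ i, f (σ x) i * f x i) < ∑ x : ↥s, ∑ i, f x i * f x i := by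
    rw [hexp, hSc] at hpos
    linarith
  have hc1 : ((∑ x : ↥s, ∑ i, ((σ x : Fin n →₀ ℕ) i) * ((x : Fin n →₀ ℕ) i) : ℕ) : ℤ) =
      ∑ x : ↥s, ∑ i, f (σ x) i * f x i := by
    push_cast [hf]; rfl
  have hc2 : ((∑ x : ↥s, ∑ i, ((x : Fin n →₀ ℕ) i) * ((x : Fin n →₀ ℕ) i) : ℕ) : ℤ) =
      ∑ x : ↥s, ∑ i, f x i * f x i := by
    push_cast [hf]; rfl
  have : ((∑ x : ↥s, ∑ i, ((σ x : Fin n →₀ ℕ) i) * ((x : Fin n →₀ ℕ) i) : ℕ) : ℤ) <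
      ((∑ x : ↥s, ∑ i, ((x : Fin n →₀ ℕ) i) * ((x : Fin n →₀ ℕ) i) : ℕ) : ℤ) := by
    rw [hc1, hc2]; exact hltZ
  exact_mod_cast this

lemma eval_support_zero {n : ℕ} (G : MvPolynomial (Fin n) KK)
    (h : ∀ m ∈ G.support, MvPolynomial.eval (mubar ⇑m) G = 0) : G = 0 := by
  classical
  by_contra hG
  set s := G.support with hs
  set A : Equiv.Perm ↥s → ℕ :=
    fun σ => ∑ x : ↥s, ∑ i, ((σ x : Fin n →₀ ℕ) i) * ((x : Fin n →₀ ℕ) i) with hA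
  set NP : Matrix ↥s ↥s (Polynomial kk) := fun ν μ =>
    Polynomial.C (tk ^ (-(∑ i, (kStat ⇑(ν : Fin n →₀ ℕ) i : ℤ) * (((μ : Fin n →₀ ℕ) i : ℕ) : ℤ)))) *
      Polynomial.X ^ (∑ i, (ν : Fin n →₀ ℕ) i * (μ : Fin n →₀ ℕ) i) with hNP
  set M : Matrix ↥s ↥s KK := fun ν μ =>
    ∏ i, (mubar ⇑(ν : Fin n →₀ ℕ) i) ^ ((μ : Fin n →₀ ℕ) i) with hM
  have hmap : ∀ ν μ, algebraMap (Polynomial kk) KK (NP ν μ) = M ν μ := by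
    intro ν μ
    simp only [hNP, hM]
    rw [psi_entry]
    exact (entry_eq _ _).symm
  have hprod : ∀ σ : Equiv.Perm ↥s, (∏ x : ↥s, NP (σ x) x) =
      Polynomial.C (tk ^ (∑ x : ↥s,
        -(∑ i, (kStat ⇑(σ x : Fin n →₀ ℕ) i : ℤ) * (((x : Fin n →₀ ℕ) i : ℕ) : ℤ)))) *
        Polynomial.X ^ (A σ) := by
    intro σ
    rw [hNP, hA, Finset.prod_mul_distrib, ← map_prod, prod_zpow_poly, Finset.prod_pow_eq_pow_sum]
  have hcoeff : (NP.det).coeff (A 1) ≠ 0 := by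
    rw [Matrix.det_apply', Polynomial.finset_sum_coeff,
      Finset.sum_eq_single (1 : Equiv.Perm ↥s)]
    · rw [hprod 1]
      simp only [Equiv.Perm.sign_one, Units.val_one, Int.cast_one, one_mul]
      rw [Polynomial.coeff_C_mul, Polynomial.coeff_X_pow, if_pos rfl, mul_one]
      exact zpow_ne_zero _ tk_ne
    · intro σ _ hσ
      rw [hprod σ, ← zsmul_eq_mul, Polynomial.coeff_smul,
        Polynomial.coeff_C_mul, Polynomial.coeff_X_pow]
      have hlt : A σ < A 1 := by
        have := perm_sum_lt s σ hσ
        simpa [hA, Equiv.Perm.one_apply] using this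
      rw [if_neg (ne_of_gt hlt), mul_zero, smul_zero]
    · intro hmem
      exact absurd (Finset.mem_univ _) hmem
  have hdetNP : NP.det ≠ 0 := fun h0 => hcoeff (by rw [h0, Polynomial.coeff_zero])
  have hdetM : M.det ≠ 0 := by
    have hMeq : M = (algebraMap (Polynomial kk) KK).mapMatrix NP := by
      rw [RingHom.mapMatrix_apply]
      ext ν μ
      rw [Matrix.map_apply]
      exact (hmap ν μ).symm
    rw [hMeq, ← RingHom.map_det]
    intro h0
    exact hdetNP ((RatFunc.algebraMap_injective kk) (by rw [h0, map_zero]))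
  have hmv : M.mulVec (fun μ : ↥s => G.coeff ↑μ) = 0 := by
    funext ν
    have hev := h ν.1 ν.2
    rw [MvPolynomial.eval_eq'] at hev
    have h1 : (M.mulVec (fun μ : ↥s => G.coeff ↑μ)) ν = ∑ μ : ↥s, M ν μ * G.coeff ↑μ := rfl
    rw [h1, Pi.zero_apply]
    calc ∑ μ : ↥s, M ν μ * G.coeff ↑μ
        = ∑ μ ∈ s.attach, G.coeff ↑μ * ∏ i, (mubar ⇑(ν : Fin n →₀ ℕ) i) ^ ((μ : Fin n →₀ ℕ) i) := by
          rw [Finset.univ_eq_attach]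
          exact Finset.sum_congr rfl (fun μ _ => by rw [hM, mul_comm])
      _ = ∑ d ∈ s, G.coeff d * ∏ i, (mubar ⇑(ν : Fin n →₀ ℕ) i) ^ (d i) :=
          Finset.sum_attach s (fun d => G.coeff d * ∏ i, (mubar ⇑(ν : Fin n →₀ ℕ) i) ^ (d i))
      _ = 0 := hev
  have hc0 : (fun μ : ↥s => G.coeff ↑μ) = 0 := by
    have hunit : IsUnit M.det := isUnit_iff_ne_zero.mpr hdetM
    have hinv := Matrix.nonsing_inv_mul M hunit
    calc (fun μ : ↥s => G.coeff ↑μ)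
        = Matrix.mulVec 1 (fun μ : ↥s => G.coeff ↑μ) := (Matrix.one_mulVec _).symm
      _ = Matrix.mulVec (M⁻¹ * M) (fun μ : ↥s => G.coeff ↑μ) := by rw [hinv]
      _ = Matrix.mulVec M⁻¹ (Matrix.mulVec M (fun μ : ↥s => G.coeff ↑μ)) :=
          (Matrix.mulVec_mulVec _ _ _).symm
      _ = 0 := by rw [hmv, Matrix.mulVec_zero]
  obtain ⟨m, hm⟩ := MvPolynomial.support_nonempty.mpr hG
  exact (MvPolynomial.mem_support_iff.mp hm) (congrFun hc0 ⟨m, hm⟩)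

-- basics
lemma toMono_apply {n : ℕ} (μ : Fin n → ℕ) : ⇑(toMono μ) = μ := rfl

lemma toMono_coe {n : ℕ} (m : Fin n →₀ ℕ) : toMono ⇑m = m := by
  simp [toMono]

lemma wt_comp_equiv {n : ℕ} (ν : Fin n → ℕ) (π : Equiv.Perm (Fin n)) :
    wt (ν ∘ ⇑π) = wt ν := by
  simpa [wt, Function.comp] using Equiv.sum_comp π ν

lemma coeff_symm {n : ℕ} {P : MvPolynomial (Fin n) KK} (hs : P.IsSymmetric)
    (lam : Fin n → ℕ) (σ : Equiv.Perm (Fin n)) :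
    P.coeff (toMono (lam ∘ ⇑σ)) = P.coeff (toMono lam) := by
  have h1 : Finsupp.mapDomain ⇑σ⁻¹ (toMono lam) = toMono (lam ∘ ⇑σ) := by
    ext i
    rw [Finsupp.mapDomain_equiv_apply]
    simp [toMono, Equiv.Perm.inv_def]
  conv_lhs => rw [← hs σ⁻¹, ← h1]
  exact MvPolynomial.coeff_rename_mapDomain _ (Equiv.injective _) _ _

lemma mem_permSet_iff {n : ℕ} (lam ν : Fin n → ℕ) :
    ν ∈ permSet lam ↔ ∃ σ : Equiv.Perm (Fin n), ν = lam ∘ ⇑σ := by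
  simp [permSet, eq_comm]

lemma wt_of_mem_permSet {n : ℕ} {lam ν : Fin n → ℕ} (h : ν ∈ permSet lam) :
    wt ν = wt lam := by
  obtain ⟨σ, rfl⟩ := (mem_permSet_iff lam ν).1 h
  exact wt_comp_equiv lam σ

lemma wt_coe_toMono {n : ℕ} (m : Fin n →₀ ℕ) : ∑ i ∈ m.support, m i = wt ⇑m := by
  rw [wt]
  exact Finset.sum_subset (Finset.subset_univ _) (fun x _ hx => Finsupp.notMem_support_iff.mp hx)

lemma kStat_eq_card {n : ℕ} (μ : Fin n → ℕ) (x : Fin n) :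
    kStat μ x = (Finset.univ.filter fun y =>
      (y < x ∧ μ x < μ y) ∨ (x < y ∧ μ x ≤ μ y)).card := by
  rw [kStat, Finset.filter_or, Finset.card_union_of_disjoint]
  apply Finset.disjoint_left.mpr
  intro a ha hb
  simp only [Finset.mem_filter] at ha hb
  exact absurd ha.2.1 (lt_asymm hb.2.1)

lemma cond_swap {n : ℕ} (ν : Fin n → ℕ) (i j : Fin n) (hij : (i : ℕ) + 1 = (j : ℕ))
    (hab : ν i < ν j) (x y : Fin n) :
    ((y < x ∧ ν (Equiv.swap i j x) < ν (Equiv.swap i j y)) ∨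
      (x < y ∧ ν (Equiv.swap i j x) ≤ ν (Equiv.swap i j y))) ↔
    ((Equiv.swap i j y < Equiv.swap i j x ∧ ν (Equiv.swap i j x) < ν (Equiv.swap i j y)) ∨
      (Equiv.swap i j x < Equiv.swap i j y ∧ ν (Equiv.swap i j x) ≤ ν (Equiv.swap i j y))) := by
  simp only [Equiv.swap_apply_def]
  split_ifs <;> subst_vars <;>
    simp only [Fin.lt_def, Fin.ext_iff, not_iff_not] at * <;> omega

lemma kStat_comp_swap {n : ℕ} (ν : Fin n → ℕ) (i j : Fin n) (hij : (i : ℕ) + 1 = (j : ℕ))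
    (hab : ν i < ν j) (x : Fin n) :
    kStat (ν ∘ ⇑(Equiv.swap i j)) x = kStat ν (Equiv.swap i j x) := by
  rw [kStat_eq_card, kStat_eq_card]
  apply Finset.card_bij' (fun y _ => Equiv.swap i j y) (fun y _ => Equiv.swap i j y)
  · intro a ha
    simp only [Finset.mem_filter, Finset.mem_univ, true_and, Function.comp_apply] at ha ⊢
    exact (cond_swap ν i j hij hab x a).mp ha
  · intro a ha
    simp only [Finset.mem_filter, Finset.mem_univ, true_and, Function.comp_apply] at ha ⊢
    have h2 := (cond_swap ν i j hij hab x (Equiv.swap i j a)).mpr (by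
      simpa only [Equiv.swap_apply_self] using ha)
    simpa only [Equiv.swap_apply_self] using h2
  · intro a _; exact Equiv.swap_apply_self _ _ _
  · intro a _; exact Equiv.swap_apply_self _ _ _

lemma mubar_comp_swap {n : ℕ} (ν : Fin n → ℕ) (i j : Fin n) (hij : (i : ℕ) + 1 = (j : ℕ))
    (hab : ν i < ν j) :
    mubar (ν ∘ ⇑(Equiv.swap i j)) = mubar ν ∘ ⇑(Equiv.swap i j) := by
  funext x
  simp only [mubar, Function.comp_apply, kStat_comp_swap ν i j hij hab x]

lemma exists_adjacent_inversion {n : ℕ} (ν : Fin n → ℕ) (h : ¬ IsPartition ν) :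
    ∃ (k : ℕ) (hk : k + 1 < n), ν ⟨k, by omega⟩ < ν ⟨k + 1, hk⟩ := by
  by_contra hc
  push_neg at hc
  apply h
  have step : ∀ (d a : ℕ) (h : a + d < n), ν ⟨a + d, h⟩ ≤ ν ⟨a, by omega⟩ := by
    intro d
    induction d with
    | zero => intro a h; exact le_refl _
    | succ d ihd =>
      intro a h
      have h1 : a + d + 1 < n := by omega
      have := hc (a + d) h1
      exact le_trans (hc (a + d) h1) (ihd a (by omega))
  intro p q hpq
  have := step (q.val - p.val) p.val (by omega)
  have he : (⟨p.val + (q.val - p.val), by omega⟩ : Fin n) = q := by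
    apply Fin.ext; simp; omega
  rwa [he] at this

lemma sortLemma {n : ℕ} (ν : Fin n → ℕ) :
    ∃ (lam' : Fin n → ℕ) (π : Equiv.Perm (Fin n)),
      IsPartition lam' ∧ ν = lam' ∘ ⇑π ∧ mubar ν = mubar lam' ∘ ⇑π := by
  suffices H : ∀ (m : ℕ) (ν : Fin n → ℕ), (∑ x : Fin n, (x : ℕ) * ν x) = m →
      ∃ (lam' : Fin n → ℕ) (π : Equiv.Perm (Fin n)),
        IsPartition lam' ∧ ν = lam' ∘ ⇑π ∧ mubar ν = mubar lam' ∘ ⇑π by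
    exact H _ ν rfl
  intro m
  induction m using Nat.strong_induction_on with
  | _ m ih =>
    intro ν hm
    by_cases hp : IsPartition ν
    · exact ⟨ν, Equiv.refl _, hp, rfl, rfl⟩
    · obtain ⟨k, hk, hlt⟩ := exists_adjacent_inversion ν hp
      set i : Fin n := ⟨k, by omega⟩ with hi
      set j : Fin n := ⟨k + 1, hk⟩ with hj
      set s := Equiv.swap i j with hs
      have hij : (i : ℕ) + 1 = (j : ℕ) := rfl
      have hne : i ≠ j := by simp [hi, hj, Fin.ext_iff]
      -- the measure decreases
      have hS' : (∑ x : Fin n, ((x : ℕ) : ℤ) * ν (s x)) =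
          ∑ x : Fin n, (((s x : Fin n) : ℕ) : ℤ) * ν x := by
        rw [← Equiv.sum_comp s (fun y => (((s y : Fin n) : ℕ) : ℤ) * ν y)]
        apply Finset.sum_congr rfl
        intro x _
        rw [Equiv.swap_apply_self]
      have hdiff : (∑ x : Fin n, ((x : ℕ) : ℤ) * ν x) -
          (∑ x : Fin n, (((s x : Fin n) : ℕ) : ℤ) * ν x) = (ν j : ℤ) - (ν i : ℤ) := by
        rw [← Finset.sum_sub_distrib]
        have hsub : ∑ x : Fin n, (((x : ℕ) : ℤ) * ν x - (((s x : Fin n) : ℕ) : ℤ) * ν x) =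
            ∑ x ∈ ({i, j} : Finset (Fin n)), (((x : ℕ) : ℤ) * ν x - (((s x : Fin n) : ℕ) : ℤ) * ν x) := by
          symm
          apply Finset.sum_subset (Finset.subset_univ _)
          intro x _ hx
          simp only [Finset.mem_insert, Finset.mem_singleton, not_or] at hx
          rw [Equiv.swap_apply_of_ne_of_ne hx.1 hx.2]
          ring
        rw [hsub, Finset.sum_pair hne, Equiv.swap_apply_left, Equiv.swap_apply_right]
        have hcast : ((i : ℕ) : ℤ) + 1 = ((j : ℕ) : ℤ) := by exact_mod_cast hij
        linear_combination ((ν i : ℤ) - (ν j : ℤ)) * hcast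
      have hpos : (0 : ℤ) < (ν j : ℤ) - (ν i : ℤ) := by
        have : (ν i : ℤ) < (ν j : ℤ) := by exact_mod_cast hlt
        linarith
      have h1' : (∑ x : Fin n, ((x : ℕ) : ℤ) * ν (s x)) < ∑ x : Fin n, ((x : ℕ) : ℤ) * ν x := by
        rw [hS']; linarith [hdiff]
      have hdec : (∑ x : Fin n, (x : ℕ) * (ν ∘ ⇑s) x) < m := by
        have h2 : ((∑ x : Fin n, (x : ℕ) * (ν ∘ ⇑s) x : ℕ) : ℤ) = ∑ x : Fin n, ((x : ℕ) : ℤ) * ν (s x) := by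
          push_cast; rfl
        have h3 : ((m : ℕ) : ℤ) = ∑ x : Fin n, ((x : ℕ) : ℤ) * ν x := by
          rw [← hm]; push_cast; rfl
        have h4 : ((∑ x : Fin n, (x : ℕ) * (ν ∘ ⇑s) x : ℕ) : ℤ) < ((m : ℕ) : ℤ) := by
          rw [h2, h3]; exact h1'
        exact_mod_cast h4
      obtain ⟨lam', π', h1, h2, h3⟩ := ih _ hdec (ν ∘ ⇑s) rfl
      have hss : ∀ x, s (s x) = x := fun x => Equiv.swap_apply_self _ _ x
      refine ⟨lam', s.trans π', h1, ?_, ?_⟩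
      · funext x
        have := congrFun h2 (s x)
        simp only [Function.comp_apply, hss] at this
        simpa [Function.comp_apply] using this
      · funext x
        have hA := congrFun h3 (s x)
        have hB := congrFun (mubar_comp_swap ν i j hij hlt) (s x)
        simp only [Function.comp_apply, hss] at hA hB
        simp only [← hs, hss] at hB
        rw [← hB]
        simpa [Function.comp_apply] using hA

/-- Symmetrization identity `P*_λ = Σ_{μ ∈ Sₙ(λ)} F*_μ`. -/
theorem interpolation_symmetrization (n : ℕ) (hn : 0 < n)
    (lam : Fin n → ℕ) (hlam : IsPartition lam)
    (P : MvPolynomial (Fin n) KK) (hP : IsIntMacdonald lam P)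
    (F : (Fin n → ℕ) → MvPolynomial (Fin n) KK)
    (hF : ∀ μ ∈ permSet lam, IsIntASEP lam μ (F μ)) :
    P = ∑ μ ∈ permSet lam, F μ := by
  classical
  set G : MvPolynomial (Fin n) KK := P - ∑ μ ∈ permSet lam, F μ with hG
  have key : ∀ m ∈ G.support, MvPolynomial.eval (mubar ⇑m) G = 0 := by
    intro m hm
    have hcm : G.coeff m ≠ 0 := MvPolynomial.mem_support_iff.mp hm
    set ν : Fin n → ℕ := ⇑m with hν
    have htm : toMono ν = m := toMono_coe m
    have hnotin : ν ∉ permSet lam := by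
      intro hin
      apply hcm
      rw [hG, MvPolynomial.coeff_sub, MvPolynomial.coeff_sum]
      obtain ⟨σ, hσ⟩ := (mem_permSet_iff lam ν).1 hin
      have hP1 : P.coeff m = 1 := by
        rw [← htm, hσ, coeff_symm hP.1 lam σ]
        exact hP.2.2.1
      have hFsum : (∑ μ ∈ permSet lam, (F μ).coeff m) = 1 := by
        have hco : ∀ μ ∈ permSet lam, (F μ).coeff m = if ν = μ then 1 else 0 := by
          intro μ hμ
          rw [← htm]
          exact (hF μ hμ).2.1 ν hin
        rw [Finset.sum_congr rfl hco, Finset.sum_ite_eq (permSet lam) ν (fun _ => (1 : KK))]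
        rw [if_pos hin]
      rw [hP1, hFsum, sub_self]
    have hwt : wt ν ≤ wt lam := by
      by_contra hgt
      push_neg at hgt
      apply hcm
      have hdeg : ∀ Q : MvPolynomial (Fin n) KK, Q.totalDegree ≤ wt lam → Q.coeff m = 0 := by
        intro Q hQ
        apply MvPolynomial.coeff_eq_zero_of_totalDegree_lt
        calc Q.totalDegree ≤ wt lam := hQ
          _ < wt ⇑m := hgt
          _ = ∑ i ∈ m.support, m i := (wt_coe_toMono m).symm
      rw [hG, MvPolynomial.coeff_sub, MvPolynomial.coeff_sum, hdeg P hP.2.1,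
        Finset.sum_congr rfl (fun μ hμ => hdeg (F μ) (hF μ hμ).1)]
      simp
    rw [hG, map_sub, map_sum]
    have hFz : ∀ μ ∈ permSet lam, MvPolynomial.eval (mubar ν) (F μ) = 0 :=
      fun μ hμ => (hF μ hμ).2.2 ν hwt hnotin
    obtain ⟨lam', π, hpart, hcomp, hmu⟩ := sortLemma ν
    have hPz : MvPolynomial.eval (mubar ν) P = 0 := by
      have hne : lam' ≠ lam := by
        intro he
        apply hnotin
        rw [mem_permSet_iff]
        exact ⟨π, by rw [← he]; exact hcomp⟩
      have hwt' : wt lam' ≤ wt lam := by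
        have hwteq : wt ν = wt lam' := by rw [hcomp]; exact wt_comp_equiv lam' π
        omega
      have hz := hP.2.2.2 lam' hpart hne hwt'
      rw [hmu]
      calc MvPolynomial.eval (mubar lam' ∘ ⇑π) P
          = MvPolynomial.eval (mubar lam') (MvPolynomial.rename ⇑π P) :=
            (MvPolynomial.eval_rename _ _ _).symm
        _ = MvPolynomial.eval (mubar lam') P := by rw [hP.1 π]
        _ = 0 := hz
    rw [hPz, Finset.sum_congr rfl hFz]
    simp
  have hz : G = 0 := eval_support_zero G key
  rw [hG] at hz
  exact sub_eq_zero.mp hz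
end
end
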